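/- (Full OS-VI control error propagation, sup norm) Suppose V_k = S* V_{k-1} + ε_k with ‖ε_k‖_∞ ≤ ε for all k ≥ 1, and S^{π_k} V_{k-1} = S* V_{k-1} + ε^policy_k. Let γ' = (γ/(1-γ)) max_{π ∈ Π_k} ‖P^π - P̂^π‖_∞ < 1, where Π_k contains π*, π_k, and all intermediate S-improved policies. Then ‖V^{π_k} - V*‖_∞ ≤ (2γ'^k/(1-γ')) ‖V_0 - V*‖_∞ + (2γ'(1-γ'^{k-1})/(1-γ')²) ε + (1/(1-γ')) ‖ε^policy_k‖_∞. -/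

import Mathlib

open Matrix

/-- Supremum norm on vectors. -/
noncomputable def vnorm {d : ℕ} (v : Fin d → ℝ) : ℝ := ⨆ i, |v i|

/-- Maximum absolute row sum: the operator norm induced by the supremum norm. -/
noncomputable def mnorm {d : ℕ} (M : Matrix (Fin d) (Fin d) ℝ) : ℝ :=
  ⨆ i, ∑ j, |M i j|

/-- Transition matrix of a deterministic policy. -/
def Pmat {d m : ℕ} (P : Fin d → Fin m → Fin d → ℝ) (pol : Fin d → Fin m) :
    Matrix (Fin d) (Fin d) ℝ :=
  fun x y => P x (pol x) y

/-- Reward vector of a deterministic policy. -/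
def rvec {d m : ℕ} (r : Fin d → Fin m → ℝ) (pol : Fin d → Fin m) : Fin d → ℝ :=
  fun x => r x (pol x)

/-- The Varga operator `S^π V = (I - γ P̂^π)⁻¹ (r^π + γ (P^π - P̂^π) V)`. -/
noncomputable def varga {d : ℕ} (γ : ℝ) (Ppol Phatpol : Matrix (Fin d) (Fin d) ℝ)
    (rpol V : Fin d → ℝ) : Fin d → ℝ :=
  ((1 - γ • Phatpol)⁻¹).mulVec (rpol + γ • ((Ppol - Phatpol).mulVec V))

/-- The Varga optimality operator `S* V = max_π S^π V` (componentwise over policies). -/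
noncomputable def Sstar {d m : ℕ} (γ : ℝ) (P Phat : Fin d → Fin m → Fin d → ℝ)
    (r : Fin d → Fin m → ℝ) (V : Fin d → ℝ) : Fin d → ℝ :=
  fun x => ⨆ pol : Fin d → Fin m, varga γ (Pmat P pol) (Pmat Phat pol) (rvec r pol) V x


lemma abs_le_vnorm {d : ℕ} (v : Fin d → ℝ) (i : Fin d) : |v i| ≤ vnorm v := by
  unfold vnorm
  exact le_ciSup (Set.Finite.bddAbove (Set.finite_range fun i => |v i|)) i

lemma vnorm_nonneg {d : ℕ} (v : Fin d → ℝ) : 0 ≤ vnorm v := by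
  rcases isEmpty_or_nonempty (Fin d) with h | h
  · simp [vnorm, Real.iSup_of_isEmpty]
  · exact le_trans (abs_nonneg _) (abs_le_vnorm v (Classical.arbitrary _))

lemma vnorm_le {d : ℕ} {v : Fin d → ℝ} {c : ℝ} (hc : 0 ≤ c) (h : ∀ i, |v i| ≤ c) :
    vnorm v ≤ c := Real.iSup_le h hc

lemma rowsum_le_mnorm {d : ℕ} (M : Matrix (Fin d) (Fin d) ℝ) (i : Fin d) :
    ∑ j, |M i j| ≤ mnorm M := by
  unfold mnorm
  exact le_ciSup (Set.Finite.bddAbove (Set.finite_range fun i => ∑ j, |M i j|)) i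

lemma mnorm_nonneg {d : ℕ} (M : Matrix (Fin d) (Fin d) ℝ) : 0 ≤ mnorm M := by
  rcases isEmpty_or_nonempty (Fin d) with h | h
  · simp [mnorm, Real.iSup_of_isEmpty]
  · exact le_trans (Finset.sum_nonneg fun j _ => abs_nonneg _)
      (rowsum_le_mnorm M (Classical.arbitrary _))

lemma abs_mulVec_le {d : ℕ} (M : Matrix (Fin d) (Fin d) ℝ) (v : Fin d → ℝ) (i : Fin d) :
    |M.mulVec v i| ≤ (∑ j, |M i j|) * vnorm v := by
  have hmv : M.mulVec v i = ∑ j, M i j * v j := rfl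
  rw [hmv]
  calc |∑ j, M i j * v j| ≤ ∑ j, |M i j * v j| :=
        Finset.abs_sum_le_sum_abs _ _
    _ ≤ ∑ j, |M i j| * vnorm v := by
        refine Finset.sum_le_sum fun j _ => ?_
        rw [abs_mul]
        exact mul_le_mul_of_nonneg_left (abs_le_vnorm v j) (abs_nonneg _)
    _ = (∑ j, |M i j|) * vnorm v := by rw [Finset.sum_mul]

lemma vnorm_mulVec_le {d : ℕ} (M : Matrix (Fin d) (Fin d) ℝ) (v : Fin d → ℝ) :
    vnorm (M.mulVec v) ≤ mnorm M * vnorm v := by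
  refine vnorm_le (mul_nonneg (mnorm_nonneg M) (vnorm_nonneg v)) fun i => ?_
  exact le_trans (abs_mulVec_le M v i)
    (mul_le_mul_of_nonneg_right (rowsum_le_mnorm M i) (vnorm_nonneg v))

lemma vnorm_add_le {d : ℕ} (v w : Fin d → ℝ) : vnorm (v + w) ≤ vnorm v + vnorm w := by
  refine vnorm_le (add_nonneg (vnorm_nonneg v) (vnorm_nonneg w)) fun i => ?_
  exact le_trans (abs_add_le _ _) (add_le_add (abs_le_vnorm v i) (abs_le_vnorm w i))

lemma vnorm_smul_le {d : ℕ} (a : ℝ) (v : Fin d → ℝ) (ha : 0 ≤ a) :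
    vnorm (a • v) ≤ a * vnorm v := by
  refine vnorm_le (mul_nonneg ha (vnorm_nonneg v)) fun i => ?_
  simp only [Pi.smul_apply, smul_eq_mul, abs_mul, abs_of_nonneg ha]
  exact mul_le_mul_of_nonneg_left (abs_le_vnorm v i) ha

/-- Stochastic matrix predicate. -/
def StochMat {d : ℕ} (Q : Matrix (Fin d) (Fin d) ℝ) : Prop :=
  (∀ i j, 0 ≤ Q i j) ∧ ∀ i, ∑ j, Q i j = 1

lemma stoch_mulVec_le {d : ℕ} {Q : Matrix (Fin d) (Fin d) ℝ} (hQ : StochMat Q)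
    (v : Fin d → ℝ) : vnorm (Q.mulVec v) ≤ vnorm v := by
  refine vnorm_le (vnorm_nonneg v) fun i => ?_
  have := abs_mulVec_le Q v i
  have hrow : ∑ j, |Q i j| = 1 := by
    rw [← hQ.2 i]; exact Finset.sum_congr rfl fun j _ => abs_of_nonneg (hQ.1 i j)
  rw [hrow, one_mul] at this; exact this

lemma stoch_det_ne {d : ℕ} {γ : ℝ} (hγ0 : 0 ≤ γ) (hγ1 : γ < 1)
    {Q : Matrix (Fin d) (Fin d) ℝ} (hQ : StochMat Q) :
    (1 - γ • Q).det ≠ 0 := by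
  intro hdet
  obtain ⟨v, hv, hmul⟩ := (Matrix.exists_mulVec_eq_zero_iff).2 hdet
  have hveq : v = γ • Q.mulVec v := by
    have : (1 : Matrix (Fin d) (Fin d) ℝ).mulVec v - (γ • Q).mulVec v = 0 := by
      rw [← Matrix.sub_mulVec]; exact hmul
    have h1 : (1 : Matrix (Fin d) (Fin d) ℝ).mulVec v = v := Matrix.one_mulVec v
    have h2 : (γ • Q).mulVec v = γ • Q.mulVec v := Matrix.smul_mulVec γ Q v
    rw [h1, h2, sub_eq_zero] at this; exact this
  have hb : vnorm v ≤ γ * vnorm v := by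
    calc vnorm v = vnorm (γ • Q.mulVec v) := by rw [← hveq]
      _ ≤ γ * vnorm (Q.mulVec v) := vnorm_smul_le _ _ hγ0
      _ ≤ γ * vnorm v := mul_le_mul_of_nonneg_left (stoch_mulVec_le hQ v) hγ0
  have hv0 : vnorm v ≤ 0 := by nlinarith [vnorm_nonneg v]
  exact hv ((funext fun i => abs_nonpos_iff.mp (le_trans (abs_le_vnorm v i) hv0)))

lemma stoch_inv_eq {d : ℕ} {γ : ℝ} (hγ0 : 0 ≤ γ) (hγ1 : γ < 1)
    {Q : Matrix (Fin d) (Fin d) ℝ} (hQ : StochMat Q) (w : Fin d → ℝ) :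
    (1 - γ • Q).mulVec (((1 - γ • Q)⁻¹).mulVec w) = w := by
  rw [Matrix.mulVec_mulVec, Matrix.mul_nonsing_inv _
    (isUnit_iff_ne_zero.mpr (stoch_det_ne hγ0 hγ1 hQ)), Matrix.one_mulVec]

lemma stoch_mulVec_inj {d : ℕ} {γ : ℝ} (hγ0 : 0 ≤ γ) (hγ1 : γ < 1)
    {Q : Matrix (Fin d) (Fin d) ℝ} (hQ : StochMat Q) {x y : Fin d → ℝ}
    (h : (1 - γ • Q).mulVec x = (1 - γ • Q).mulVec y) : x = y := by
  have hu := isUnit_iff_ne_zero.mpr (stoch_det_ne hγ0 hγ1 hQ)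
  have hx : ((1 - γ • Q)⁻¹).mulVec ((1 - γ • Q).mulVec x) = x := by
    rw [Matrix.mulVec_mulVec, Matrix.nonsing_inv_mul _ hu, Matrix.one_mulVec]
  have hy : ((1 - γ • Q)⁻¹).mulVec ((1 - γ • Q).mulVec y) = y := by
    rw [Matrix.mulVec_mulVec, Matrix.nonsing_inv_mul _ hu, Matrix.one_mulVec]
  rw [← hx, ← hy, h]

lemma varga_unfold {d : ℕ} {γ : ℝ} (hγ0 : 0 ≤ γ) (hγ1 : γ < 1)
    (Pp : Matrix (Fin d) (Fin d) ℝ) {Ph : Matrix (Fin d) (Fin d) ℝ} (hPh : StochMat Ph)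
    (rp V : Fin d → ℝ) :
    varga γ Pp Ph rp V =
      rp + γ • ((Pp - Ph).mulVec V) + γ • Ph.mulVec (varga γ Pp Ph rp V) := by
  have h := stoch_inv_eq hγ0 hγ1 hPh (rp + γ • ((Pp - Ph).mulVec V))
  set u := varga γ Pp Ph rp V with hu
  have h2 : u - γ • Ph.mulVec u = rp + γ • ((Pp - Ph).mulVec V) := by
    have : (1 - γ • Ph).mulVec u = u - γ • Ph.mulVec u := by
      rw [Matrix.sub_mulVec, Matrix.one_mulVec, Matrix.smul_mulVec]
    rw [← this]; exact h
  have := h2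
  funext x
  have hx := congrFun h2 x
  simp only [Pi.sub_apply, Pi.add_apply] at hx ⊢
  linarith

lemma varga_contract {d : ℕ} {γ : ℝ} (hγ0 : 0 ≤ γ) (hγ1 : γ < 1)
    (Pp : Matrix (Fin d) (Fin d) ℝ) {Ph : Matrix (Fin d) (Fin d) ℝ} (hPh : StochMat Ph)
    (rp V W : Fin d → ℝ) :
    vnorm (varga γ Pp Ph rp V - varga γ Pp Ph rp W) ≤
      γ / (1 - γ) * mnorm (Pp - Ph) * vnorm (V - W) := by
  set u := varga γ Pp Ph rp V - varga γ Pp Ph rp W with hudef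
  have h1 := varga_unfold hγ0 hγ1 Pp hPh rp V
  have h2 := varga_unfold hγ0 hγ1 Pp hPh rp W
  have key : u = γ • ((Pp - Ph).mulVec (V - W)) + γ • Ph.mulVec u := by
    rw [hudef]
    nth_rewrite 1 [h1, h2]
    rw [Matrix.mulVec_sub, Matrix.mulVec_sub, smul_sub, smul_sub]
    abel
  have hb : vnorm u ≤ γ * (mnorm (Pp - Ph) * vnorm (V - W)) + γ * vnorm u := by
    calc vnorm u = vnorm (γ • ((Pp - Ph).mulVec (V - W)) + γ • Ph.mulVec u) := by
          rw [← key]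
      _ ≤ vnorm (γ • ((Pp - Ph).mulVec (V - W))) + vnorm (γ • Ph.mulVec u) :=
          vnorm_add_le _ _
      _ ≤ γ * (mnorm (Pp - Ph) * vnorm (V - W)) + γ * vnorm u := by
          refine add_le_add ?_ ?_
          · exact le_trans (vnorm_smul_le _ _ hγ0) (mul_le_mul_of_nonneg_left
              (vnorm_mulVec_le _ _) hγ0)
          · exact le_trans (vnorm_smul_le _ _ hγ0) (mul_le_mul_of_nonneg_left
              (stoch_mulVec_le hPh _) hγ0)
  have h1γ : 0 < 1 - γ := by linarith
  rw [div_mul_eq_mul_div, div_mul_eq_mul_div, le_div_iff₀ h1γ]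
  nlinarith [vnorm_nonneg u]



lemma varga_fixed {d : ℕ} {γ : ℝ} (hγ0 : 0 ≤ γ) (hγ1 : γ < 1)
    {Pp Ph : Matrix (Fin d) (Fin d) ℝ} (hPp : StochMat Pp) (hPh : StochMat Ph)
    (rp : Fin d → ℝ) :
    varga γ Pp Ph rp (((1 - γ • Pp)⁻¹).mulVec rp) = ((1 - γ • Pp)⁻¹).mulVec rp := by
  set Vp := ((1 - γ • Pp)⁻¹).mulVec rp with hVp
  have hVpe : (1 - γ • Pp).mulVec Vp = rp := stoch_inv_eq hγ0 hγ1 hPp rp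
  refine stoch_mulVec_inj hγ0 hγ1 hPh ?_
  unfold varga
  rw [stoch_inv_eq hγ0 hγ1 hPh]
  funext x
  have hA : ((1 - γ • Ph).mulVec Vp) x = Vp x - γ * ∑ y, Ph x y * Vp y := by
    rw [Matrix.sub_mulVec, Matrix.one_mulVec, Matrix.smul_mulVec]
    simp only [Pi.sub_apply, Pi.smul_apply, smul_eq_mul]
    rfl
  have hB : Vp x - γ * ∑ y, Pp x y * Vp y = rp x := by
    have := congrFun hVpe x
    rw [Matrix.sub_mulVec, Matrix.one_mulVec, Matrix.smul_mulVec] at this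
    simp only [Pi.sub_apply, Pi.smul_apply, smul_eq_mul] at this
    exact this
  have hmv1 : ((Pp - Ph).mulVec Vp) x = ∑ y, Pp x y * Vp y - ∑ y, Ph x y * Vp y := by
    simp [Matrix.mulVec, dotProduct, Matrix.sub_apply, sub_mul,
      Finset.sum_sub_distrib]
  simp only [Pi.add_apply, Pi.smul_apply, smul_eq_mul, hmv1, hA]
  linarith

lemma varga_le_opt {d : ℕ} {γ : ℝ} (hγ0 : 0 ≤ γ) (hγ1 : γ < 1)
    {Pp Ph : Matrix (Fin d) (Fin d) ℝ} (hPh : StochMat Ph)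
    {rp Vs : Fin d → ℝ} (hineq : ∀ x, rp x + γ * ∑ y, Pp x y * Vs y ≤ Vs x) :
    ∀ x, varga γ Pp Ph rp Vs x ≤ Vs x := by
  rcases Nat.eq_zero_or_pos d with hd | hd
  · subst hd; exact fun x => absurd x.2 (by omega)
  set u := varga γ Pp Ph rp Vs with hu
  have key := varga_unfold hγ0 hγ1 Pp hPh rp Vs
  set w : Fin d → ℝ := u - Vs with hw
  have hwle : ∀ x, w x ≤ γ * ∑ y, Ph x y * w y := by
    intro x
    have hx := congrFun key x
    simp only [Pi.add_apply, Pi.smul_apply, smul_eq_mul] at hx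
    have hmv1 : ((Pp - Ph).mulVec Vs) x = ∑ y, Pp x y * Vs y - ∑ y, Ph x y * Vs y := by
      simp [Matrix.mulVec, dotProduct, Matrix.sub_apply, sub_mul,
        Finset.sum_sub_distrib]
    have hmv2 : (Ph.mulVec (varga γ Pp Ph rp Vs)) x = ∑ y, Ph x y * u y := rfl
    rw [hmv1, hmv2] at hx
    have hsum : ∑ y, Ph x y * w y = ∑ y, Ph x y * u y - ∑ y, Ph x y * Vs y := by
      rw [← Finset.sum_sub_distrib]
      refine Finset.sum_congr rfl fun y _ => ?_
      show Ph x y * (u y - Vs y) = _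
      ring
    have hb := hineq x
    show u x - Vs x ≤ _
    have hux : u x = varga γ Pp Ph rp Vs x := rfl
    rw [hsum, hux, hx]
    linarith
  obtain ⟨x₀, -, hx₀⟩ := Finset.exists_max_image (Finset.univ : Finset (Fin d)) w
    ⟨⟨0, hd⟩, Finset.mem_univ _⟩
  have hmax : ∀ y, w y ≤ w x₀ := fun y => hx₀ y (Finset.mem_univ y)
  have h1 : w x₀ ≤ γ * w x₀ := by
    refine le_trans (hwle x₀) ?_
    have : ∑ y, Ph x₀ y * w y ≤ ∑ y, Ph x₀ y * w x₀ :=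
      Finset.sum_le_sum fun y _ => mul_le_mul_of_nonneg_left (hmax y) (hPh.1 x₀ y)
    have h2 : ∑ y, Ph x₀ y * w x₀ = w x₀ := by
      rw [← Finset.sum_mul, hPh.2 x₀, one_mul]
    rw [h2] at this
    exact mul_le_mul_of_nonneg_left this hγ0
  have h0 : w x₀ ≤ 0 := by nlinarith
  intro x
  have := le_trans (hmax x) h0
  simpa [hw, sub_nonpos] using this

lemma varga_opt_fixed {d : ℕ} {γ : ℝ} (hγ0 : 0 ≤ γ) (hγ1 : γ < 1)
    {Pp Ph : Matrix (Fin d) (Fin d) ℝ} (hPh : StochMat Ph)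
    {rp Vs : Fin d → ℝ} (heq : ∀ x, Vs x = rp x + γ * ∑ y, Pp x y * Vs y) :
    varga γ Pp Ph rp Vs = Vs := by
  refine stoch_mulVec_inj hγ0 hγ1 hPh ?_
  unfold varga
  rw [stoch_inv_eq hγ0 hγ1 hPh]
  funext x
  have h1 := heq x
  have hmv1 : (Pp - Ph).mulVec Vs x = ∑ y, (Pp x y - Ph x y) * Vs y := by
    simp [Matrix.mulVec, dotProduct, Matrix.sub_apply]
  have hA : (1 - γ • Ph).mulVec Vs x = Vs x - γ * ∑ y, Ph x y * Vs y := by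
    rw [Matrix.sub_mulVec, Matrix.one_mulVec, Matrix.smul_mulVec]
    simp only [Pi.sub_apply, Pi.smul_apply, smul_eq_mul]
    rfl
  have hsplit : ∑ y, (Pp x y - Ph x y) * Vs y
      = ∑ y, Pp x y * Vs y - ∑ y, Ph x y * Vs y := by
    rw [← Finset.sum_sub_distrib]
    exact Finset.sum_congr rfl fun y _ => by ring
  simp only [Pi.add_apply, Pi.smul_apply, smul_eq_mul, hA, hmv1, hsplit]
  linarith


lemma vnorm_zero {d : ℕ} : vnorm (0 : Fin d → ℝ) = 0 :=
  le_antisymm (vnorm_le le_rfl (fun i => by simp)) (vnorm_nonneg 0)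

lemma vnorm_sub_comm {d : ℕ} (a b : Fin d → ℝ) : vnorm (a - b) = vnorm (b - a) := by
  unfold vnorm
  exact congrArg _ (funext fun i => by simp [abs_sub_comm])

lemma vnorm_sub_le_trans {d : ℕ} (a b c : Fin d → ℝ) :
    vnorm (a - b) ≤ vnorm (a - c) + vnorm (c - b) := by
  have : a - b = (a - c) + (c - b) := by abel
  rw [this]; exact vnorm_add_le _ _

lemma sub_le_vnorm {d : ℕ} (a b : Fin d → ℝ) (x : Fin d) : a x - b x ≤ vnorm (a - b) :=
  le_trans (le_abs_self _) (abs_le_vnorm (a - b) x)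

lemma stoch_Pmat {d m : ℕ} {P : Fin d → Fin m → Fin d → ℝ}
    (hP : ∀ x a, (∀ y, 0 ≤ P x a y) ∧ ∑ y, P x a y = 1) (pol : Fin d → Fin m) :
    StochMat (Pmat P pol) :=
  ⟨fun i j => (hP i (pol i)).1 j, fun i => (hP i (pol i)).2⟩

lemma policy_bound {d m : ℕ} {γ : ℝ} (hγ0 : 0 ≤ γ) (hγ1 : γ < 1)
    {P Phat : Fin d → Fin m → Fin d → ℝ} {r : Fin d → Fin m → ℝ}
    (hP : ∀ x a, (∀ y, 0 ≤ P x a y) ∧ ∑ y, P x a y = 1)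
    (hPhat : ∀ x a, (∀ y, 0 ≤ Phat x a y) ∧ ∑ y, Phat x a y = 1)
    {Vstar : Fin d → ℝ} {πstar : Fin d → Fin m}
    (hbell : ∀ x, Vstar x = ⨆ a, (r x a + γ * ∑ y, P x a y * Vstar y))
    (hopt : ∀ x, Vstar x = r x (πstar x) + γ * ∑ y, P x (πstar x) y * Vstar y)
    (polarg : Fin d → Fin m) (W εq : Fin d → ℝ)
    (hargmax : varga γ (Pmat P polarg) (Pmat Phat polarg) (rvec r polarg) W =
      Sstar γ P Phat r W + εq)
    (c : ℝ)
    (hc1 : γ / (1 - γ) * mnorm (Pmat P polarg - Pmat Phat polarg) ≤ c)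
    (hc2 : γ / (1 - γ) * mnorm (Pmat P πstar - Pmat Phat πstar) ≤ c) :
    vnorm (varga γ (Pmat P polarg) (Pmat Phat polarg) (rvec r polarg) W - Vstar) ≤
      c * vnorm (W - Vstar) + vnorm εq := by
  have hc0 : 0 ≤ c := le_trans (mul_nonneg (div_nonneg hγ0 (by linarith)) (mnorm_nonneg _)) hc2
  have hbellineq : ∀ pol : Fin d → Fin m, ∀ x,
      rvec r pol x + γ * ∑ y, Pmat P pol x y * Vstar y ≤ Vstar x := by
    intro pol x
    rw [hbell x]
    exact le_ciSup (f := fun a => r x a + γ * ∑ y, P x a y * Vstar y)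
      (Set.Finite.bddAbove (Set.finite_range _)) (pol x)
  have hle : ∀ x, varga γ (Pmat P polarg) (Pmat Phat polarg) (rvec r polarg) Vstar x
      ≤ Vstar x :=
    varga_le_opt hγ0 hγ1 (stoch_Pmat hPhat polarg) (hbellineq polarg)
  have hfixstar : varga γ (Pmat P πstar) (Pmat Phat πstar) (rvec r πstar) Vstar = Vstar :=
    varga_opt_fixed hγ0 hγ1 (stoch_Pmat hPhat πstar) hopt
  have hcontr : ∀ pol : Fin d → Fin m,
      (γ / (1 - γ) * mnorm (Pmat P pol - Pmat Phat pol) ≤ c) → ∀ A B : Fin d → ℝ,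
      vnorm (varga γ (Pmat P pol) (Pmat Phat pol) (rvec r pol) A -
        varga γ (Pmat P pol) (Pmat Phat pol) (rvec r pol) B) ≤ c * vnorm (A - B) := by
    intro pol hc A B
    refine le_trans (varga_contract hγ0 hγ1 _ (stoch_Pmat hPhat pol) _ A B) ?_
    exact mul_le_mul_of_nonneg_right hc (vnorm_nonneg _)
  refine vnorm_le (add_nonneg (mul_nonneg hc0 (vnorm_nonneg _)) (vnorm_nonneg _))
    fun x => ?_
  rw [abs_le]
  constructor
  · -- lower bound: Vstar x - varga polarg W x ≤ c‖W - Vstar‖ + ‖εq‖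
    have h1 : Vstar x - varga γ (Pmat P polarg) (Pmat Phat polarg) (rvec r polarg) W x
        = Vstar x - Sstar γ P Phat r W x - εq x := by
      rw [hargmax]; simp only [Pi.add_apply]; ring
    have h2 : varga γ (Pmat P πstar) (Pmat Phat πstar) (rvec r πstar) W x ≤
        Sstar γ P Phat r W x :=
      le_ciSup (f := fun pol => varga γ (Pmat P pol) (Pmat Phat pol) (rvec r pol) W x)
        (Set.Finite.bddAbove (Set.finite_range _)) πstar
    have h3 : Vstar x - Sstar γ P Phat r W x ≤
        varga γ (Pmat P πstar) (Pmat Phat πstar) (rvec r πstar) Vstar x -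
        varga γ (Pmat P πstar) (Pmat Phat πstar) (rvec r πstar) W x := by
      rw [hfixstar]; linarith
    have h4 := sub_le_vnorm (varga γ (Pmat P πstar) (Pmat Phat πstar) (rvec r πstar) Vstar)
      (varga γ (Pmat P πstar) (Pmat Phat πstar) (rvec r πstar) W) x
    have h5 := hcontr πstar hc2 Vstar W
    have h6 : vnorm (Vstar - W) = vnorm (W - Vstar) := vnorm_sub_comm _ _
    rw [h6] at h5
    have h7 : -εq x ≤ vnorm εq :=
      le_trans (neg_le_abs _) (abs_le_vnorm εq x)
    have hval : (varga γ (Pmat P polarg) (Pmat Phat polarg) (rvec r polarg) W - Vstar) x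
        = varga γ (Pmat P polarg) (Pmat Phat polarg) (rvec r polarg) W x - Vstar x := rfl
    rw [hval]
    linarith
  · -- upper bound
    have h1 : varga γ (Pmat P polarg) (Pmat Phat polarg) (rvec r polarg) W x - Vstar x ≤
        varga γ (Pmat P polarg) (Pmat Phat polarg) (rvec r polarg) W x -
        varga γ (Pmat P polarg) (Pmat Phat polarg) (rvec r polarg) Vstar x := by
      have := hle x; linarith
    have h4 := sub_le_vnorm (varga γ (Pmat P polarg) (Pmat Phat polarg) (rvec r polarg) W)
      (varga γ (Pmat P polarg) (Pmat Phat polarg) (rvec r polarg) Vstar) x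
    have h5 := hcontr polarg hc1 W Vstar
    have h0 := vnorm_nonneg εq
    have hval : (varga γ (Pmat P polarg) (Pmat Phat polarg) (rvec r polarg) W - Vstar) x
        = varga γ (Pmat P polarg) (Pmat Phat polarg) (rvec r polarg) W x - Vstar x := rfl
    rw [hval]
    linarith

/-- Full OS-VI control error propagation in sup norm (Theorem 2, `⋆ = ∞`). -/
theorem osvi_control_error_propagation {d m : ℕ} (hm : 0 < m)
    (γ : ℝ) (hγ0 : 0 ≤ γ) (hγ1 : γ < 1)
    (P Phat : Fin d → Fin m → Fin d → ℝ) (r : Fin d → Fin m → ℝ)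
    (hP : ∀ x a, (∀ y, 0 ≤ P x a y) ∧ ∑ y, P x a y = 1)
    (hPhat : ∀ x a, (∀ y, 0 ≤ Phat x a y) ∧ ∑ y, Phat x a y = 1)
    (Vstar : Fin d → ℝ) (πstar : Fin d → Fin m)
    (hbell : ∀ x, Vstar x = ⨆ a, (r x a + γ * ∑ y, P x a y * Vstar y))
    (hopt : ∀ x, Vstar x = r x (πstar x) + γ * ∑ y, P x (πstar x) y * Vstar y)
    (k : ℕ) (hk : 1 ≤ k)
    (V : ℕ → Fin d → ℝ) (ε : ℕ → Fin d → ℝ) (e : ℝ)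
    (hV : ∀ i, 1 ≤ i → i ≤ k → V i = Sstar γ P Phat r (V (i - 1)) + ε i)
    (hε : ∀ i, 1 ≤ i → i ≤ k → vnorm (ε i) ≤ e)
    (πsel : ℕ → Fin d → Fin m)
    (hsel : ∀ i, 1 ≤ i → i < k →
      varga γ (Pmat P (πsel i)) (Pmat Phat (πsel i)) (rvec r (πsel i)) (V (i - 1)) =
        Sstar γ P Phat r (V (i - 1)))
    (πk : Fin d → Fin m) (εp : Fin d → ℝ)
    (hπk : varga γ (Pmat P πk) (Pmat Phat πk) (rvec r πk) (V (k - 1)) =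
      Sstar γ P Phat r (V (k - 1)) + εp)
    (γ' : ℝ)
    (hγ'def : γ' = γ / (1 - γ) *
      (insert πstar (insert πk ((Finset.Icc 1 (k - 1)).image πsel))).sup'
        (Finset.insert_nonempty _ _)
        (fun pol => mnorm (Pmat P pol - Pmat Phat pol)))
    (hγ'lt : γ' < 1)
    (Vpik : Fin d → ℝ)
    (hVpik : Vpik = ((1 - γ • Pmat P πk)⁻¹).mulVec (rvec r πk)) :
    vnorm (Vpik - Vstar) ≤
      2 * γ' ^ k / (1 - γ') * vnorm (V 0 - Vstar) +
        2 * γ' * (1 - γ' ^ (k - 1)) / (1 - γ') ^ 2 * e +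
        1 / (1 - γ') * vnorm εp := by
  have h1γ : (0:ℝ) < 1 - γ := by linarith
  have hcoef : ∀ pol, pol ∈ insert πstar (insert πk ((Finset.Icc 1 (k-1)).image πsel)) →
      γ / (1 - γ) * mnorm (Pmat P pol - Pmat Phat pol) ≤ γ' := by
    intro pol hmem
    rw [hγ'def]
    exact mul_le_mul_of_nonneg_left
      (Finset.le_sup' (fun pol => mnorm (Pmat P pol - Pmat Phat pol)) hmem)
      (div_nonneg hγ0 h1γ.le)
  have hcstar := hcoef πstar (Finset.mem_insert_self _ _)
  have hck := hcoef πk (Finset.mem_insert_of_mem (Finset.mem_insert_self _ _))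
  have hcsel : ∀ i, 1 ≤ i → i ≤ k - 1 →
      γ / (1 - γ) * mnorm (Pmat P (πsel i) - Pmat Phat (πsel i)) ≤ γ' :=
    fun i h1 h2 => hcoef _ (Finset.mem_insert_of_mem (Finset.mem_insert_of_mem
      (Finset.mem_image_of_mem πsel (Finset.mem_Icc.mpr ⟨h1, h2⟩))))
  have hγ'0 : 0 ≤ γ' :=
    le_trans (mul_nonneg (div_nonneg hγ0 h1γ.le) (mnorm_nonneg _)) hcstar
  have h1γ' : (0:ℝ) < 1 - γ' := by linarith
  have he : 0 ≤ e := le_trans (vnorm_nonneg _) (hε 1 le_rfl hk)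
  have hB : ∀ i, i ≤ k - 1 → vnorm (V i - Vstar) ≤
      γ' ^ i * vnorm (V 0 - Vstar) + (∑ j ∈ Finset.range i, γ' ^ j) * e := by
    intro i
    induction i with
    | zero => intro _; simp
    | succ n ih =>
      intro hn
      have hb := ih (by omega)
      have hVn : V (n+1) = Sstar γ P Phat r (V n) + ε (n+1) := by
        have := hV (n+1) (by omega) (by omega)
        simpa using this
      have hSe : varga γ (Pmat P (πsel (n+1))) (Pmat Phat (πsel (n+1)))
          (rvec r (πsel (n+1))) (V n) = Sstar γ P Phat r (V n) + 0 := by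
        have := hsel (n+1) (by omega) (by omega)
        simpa using this
      have hpb := policy_bound hγ0 hγ1 hP hPhat hbell hopt (πsel (n+1)) (V n) 0 hSe γ'
        (hcsel (n+1) (by omega) hn) hcstar
      rw [vnorm_zero, add_zero] at hpb
      have heq : varga γ (Pmat P (πsel (n+1))) (Pmat Phat (πsel (n+1)))
          (rvec r (πsel (n+1))) (V n) = Sstar γ P Phat r (V n) := by
        rw [hSe, add_zero]
      rw [heq] at hpb
      have hstep : vnorm (V (n+1) - Vstar) ≤ γ' * vnorm (V n - Vstar) + e := by
        have htri : vnorm (V (n+1) - Vstar) ≤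
            vnorm (Sstar γ P Phat r (V n) - Vstar) + vnorm (ε (n+1)) := by
          rw [hVn]
          have h9 : Sstar γ P Phat r (V n) + ε (n+1) - Vstar
              = (Sstar γ P Phat r (V n) - Vstar) + ε (n+1) := by abel
          rw [h9]; exact vnorm_add_le _ _
        exact le_trans htri (add_le_add hpb (hε (n+1) (by omega) (by omega)))
      have hsum : (∑ j ∈ Finset.range (n+1), γ' ^ j)
          = γ' * ∑ j ∈ Finset.range n, γ' ^ j + 1 := geom_sum_succ
      calc vnorm (V (n+1) - Vstar) ≤ γ' * vnorm (V n - Vstar) + e := hstep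
        _ ≤ γ' * (γ' ^ n * vnorm (V 0 - Vstar) + (∑ j ∈ Finset.range n, γ' ^ j) * e) + e :=
            add_le_add_left (mul_le_mul_of_nonneg_left hb hγ'0) e
        _ = γ' ^ (n+1) * vnorm (V 0 - Vstar) + (∑ j ∈ Finset.range (n+1), γ' ^ j) * e := by
            rw [hsum, pow_succ]; ring
  have hBk := hB (k-1) le_rfl
  have hfix : varga γ (Pmat P πk) (Pmat Phat πk) (rvec r πk) Vpik = Vpik := by
    rw [hVpik]
    exact varga_fixed hγ0 hγ1 (stoch_Pmat hP πk) (stoch_Pmat hPhat πk) (rvec r πk)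
  have hpb2 := policy_bound hγ0 hγ1 hP hPhat hbell hopt πk (V (k-1)) εp hπk γ' hck hcstar
  have hcontrk : vnorm (varga γ (Pmat P πk) (Pmat Phat πk) (rvec r πk) Vpik -
      varga γ (Pmat P πk) (Pmat Phat πk) (rvec r πk) (V (k-1))) ≤
      γ' * vnorm (Vpik - V (k-1)) :=
    le_trans (varga_contract hγ0 hγ1 _ (stoch_Pmat hPhat πk) _ _ _)
      (mul_le_mul_of_nonneg_right hck (vnorm_nonneg _))
  have t0 := vnorm_sub_le_trans Vpik Vstar
    (varga γ (Pmat P πk) (Pmat Phat πk) (rvec r πk) (V (k-1)))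
  have ta : vnorm (Vpik - varga γ (Pmat P πk) (Pmat Phat πk) (rvec r πk) (V (k-1)))
      = vnorm (varga γ (Pmat P πk) (Pmat Phat πk) (rvec r πk) Vpik -
        varga γ (Pmat P πk) (Pmat Phat πk) (rvec r πk) (V (k-1))) := by rw [hfix]
  have t3 : vnorm (Vpik - V (k-1)) ≤ vnorm (Vpik - Vstar) + vnorm (V (k-1) - Vstar) := by
    have h9 := vnorm_sub_le_trans Vpik (V (k-1)) Vstar
    rwa [vnorm_sub_comm Vstar (V (k-1))] at h9
  set X := vnorm (Vpik - Vstar) with hX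
  set B := vnorm (V (k-1) - Vstar) with hBdef
  set E := vnorm εp with hE
  have hkey : X ≤ γ' * (X + B) + (γ' * B + E) := by
    calc X ≤ vnorm (Vpik - varga γ (Pmat P πk) (Pmat Phat πk) (rvec r πk) (V (k-1))) +
          vnorm (varga γ (Pmat P πk) (Pmat Phat πk) (rvec r πk) (V (k-1)) - Vstar) := t0
      _ ≤ γ' * vnorm (Vpik - V (k-1)) + (γ' * B + E) := add_le_add (ta ▸ hcontrk) hpb2
      _ ≤ γ' * (X + B) + (γ' * B + E) :=
          add_le_add_left (mul_le_mul_of_nonneg_left t3 hγ'0) _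
  have hXd : X ≤ (2 * γ' * B + E) / (1 - γ') := by
    rw [le_div_iff₀ h1γ']
    nlinarith
  set S := ∑ j ∈ Finset.range (k-1), γ' ^ j with hS
  have hgeo : S * (1 - γ') = 1 - γ' ^ (k-1) := by
    have := geom_sum_mul γ' (k-1)
    have h9 : S * (γ' - 1) = γ' ^ (k-1) - 1 := this
    linarith
  have hkk : k - 1 + 1 = k := by omega
  have hpow : γ' ^ k = γ' ^ (k-1) * γ' := by
    conv_lhs => rw [← hkk]
    rw [pow_succ]
  have hfin : (2 * γ' * (γ' ^ (k-1) * vnorm (V 0 - Vstar) + S * e) + E) / (1 - γ')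
      = 2 * γ' ^ k / (1 - γ') * vnorm (V 0 - Vstar) +
        2 * γ' * (1 - γ' ^ (k-1)) / (1 - γ') ^ 2 * e + 1 / (1 - γ') * E := by
    rw [hpow, ← hgeo]
    field_simp
  calc X ≤ (2 * γ' * B + E) / (1 - γ') := hXd
    _ ≤ (2 * γ' * (γ' ^ (k-1) * vnorm (V 0 - Vstar) + S * e) + E) / (1 - γ') := by
        gcongr
    _ = _ := hfin
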